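/- For n odd, n ≥ 3, the direct (tensor) product ((K_{n−1} − M) + K_1) × C_4 is distance magic if and only if n = 5. -/

import Mathlib

open scoped Classical
open Finset

/-- Weight of a vertex: sum of labels over its open neighborhood. -/
noncomputable def wsum {V : Type*} [Fintype V] (G : SimpleGraph V) (f : V → ℕ) (u : V) : ℕ :=
  ∑ v ∈ Finset.univ.filter (fun v => G.Adj u v), f v

/-- A graph is distance magic if some bijective labeling by 1,...,n has constant weights. -/
def IsDistanceMagic {V : Type*} [Fintype V] (G : SimpleGraph V) : Prop :=
  ∃ (f : V ≃ Fin (Fintype.card V)) (c : ℕ),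
    ∀ u, wsum G (fun v => (f v : ℕ) + 1) u = c

/-- `G` is `r`-regular. -/
def IsRegularDeg {V : Type*} [Fintype V] (G : SimpleGraph V) (r : ℕ) : Prop :=
  ∀ u : V, (Finset.univ.filter (fun v => G.Adj u v)).card = r

/-- `(a,d)`-distance antimagic: some bijective labeling by 1,...,n has weight set
`{a, a+d, ..., a+(n-1)d}`. -/
def IsDistAntimagic {V : Type*} [Fintype V] (G : SimpleGraph V) (a d : ℕ) : Prop :=
  ∃ f : V ≃ Fin (Fintype.card V),
    Finset.image (fun u => wsum G (fun v => (f v : ℕ) + 1) u) Finset.univ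
      = Finset.image (fun i : Fin (Fintype.card V) => a + (i : ℕ) * d) Finset.univ

/-- Circulant graph on `N` vertices with jumps `1,...,m` (so `H_{2m,N} = C_N^m`). -/
def circulant (N m : ℕ) : SimpleGraph (Fin N) :=
  SimpleGraph.fromRel (fun i j => ∃ k, 1 ≤ k ∧ k ≤ m ∧ ((i : ℕ) + k) % N = (j : ℕ))

/-- The graph `(K_{n-1} - M) + K_1`: vertex `0` joined to all, and vertices `1,...,n-1`
forming a complete graph minus the perfect matching pairing `i` with `i + (n-1)/2 (mod n-1)`. -/
def calG (n : ℕ) : SimpleGraph (Fin n) :=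
  SimpleGraph.fromRel (fun i j =>
    (i : ℕ) = 0 ∨ (j : ℕ) = 0 ∨
      ¬ (((i : ℕ) - 1 + (n - 1) / 2) % (n - 1) = (j : ℕ) - 1))

/-- Lexicographic product `G ∘ H`. -/
def lexProd {α β : Type*} (G : SimpleGraph α) (H : SimpleGraph β) : SimpleGraph (α × β) where
  Adj x y := G.Adj x.1 y.1 ∨ (x.1 = y.1 ∧ H.Adj x.2 y.2)
  symm := ⟨by
    rintro ⟨a, b⟩ ⟨c, d⟩ (h | ⟨h1, h2⟩)
    · exact Or.inl h.symm
    · exact Or.inr ⟨h1.symm, h2.symm⟩⟩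
  loopless := ⟨by
    rintro ⟨a, b⟩ (h | ⟨-, h⟩)
    · exact G.loopless.irrefl a h
    · exact H.loopless.irrefl b h⟩

/-- Direct (tensor) product `G × H`. -/
def tensorProd {α β : Type*} (G : SimpleGraph α) (H : SimpleGraph β) : SimpleGraph (α × β) where
  Adj x y := G.Adj x.1 y.1 ∧ H.Adj x.2 y.2
  symm := ⟨fun _ _ h => ⟨h.1.symm, h.2.symm⟩⟩
  loopless := ⟨fun x h => G.loopless.irrefl x.1 h.1⟩

/-- The Harary graph `H_{3,n}`. -/
noncomputable def harary3 (n : ℕ) : SimpleGraph (Fin n) :=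
  circulant n 1 ⊔ SimpleGraph.fromRel (fun i j =>
    if n % 2 = 0 then
      ∃ k, 1 ≤ k ∧ k ≤ n / 2 ∧ (i : ℕ) = k ∧ (j : ℕ) = (k + n / 2) % n
    else
      ((i : ℕ) = 0 ∧ ((j : ℕ) = (n - 1) / 2 ∨ (j : ℕ) = (n + 1) / 2)) ∨
      (∃ k, 1 ≤ k ∧ k < (n - 1) / 2 ∧ (i : ℕ) = k ∧ (j : ℕ) = (k + (n + 1) / 2) % n))

/-- The Harary graph `H_{2n+1,2n+3}`: `C_{2n+3}^n` together with edges `v_0 v_{n+1}`,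
`v_0 v_{n+2}` and `v_i v_{i+n+2}` for `1 ≤ i < n+1`. -/
def hararyOdd (n : ℕ) : SimpleGraph (Fin (2 * n + 3)) :=
  circulant (2 * n + 3) n ⊔ SimpleGraph.fromRel (fun i j =>
    ((i : ℕ) = 0 ∧ ((j : ℕ) = n + 1 ∨ (j : ℕ) = n + 2)) ∨
    (∃ k, 1 ≤ k ∧ k < n + 1 ∧ (i : ℕ) = k ∧ (j : ℕ) = k + n + 2))

/-- The Harary graph `H_{4n+1,4n+4}`: circulant with jumps `1,...,2n` and `2n+2`. -/
def harary41 (n : ℕ) : SimpleGraph (Fin (4 * n + 4)) :=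
  SimpleGraph.fromRel (fun i j =>
    ∃ k, ((1 ≤ k ∧ k ≤ 2 * n) ∨ k = 2 * n + 2) ∧ ((i : ℕ) + k) % (4 * n + 4) = (j : ℕ))

/-- The join `G + K_1`. -/
def joinK1 {V : Type*} (G : SimpleGraph V) : SimpleGraph (V ⊕ Unit) :=
  SimpleGraph.fromRel (fun x y =>
    match x, y with
    | Sum.inl a, Sum.inl b => G.Adj a b
    | Sum.inl _, Sum.inr _ => True
    | Sum.inr _, _ => False)

instance circDec (N m : ℕ) : DecidableRel (circulant N m).Adj := fun i j =>
  decidable_of_iff (i ≠ j ∧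
      ((∃ k : Fin (m+1), 1 ≤ (k : ℕ) ∧ ((i : ℕ) + k) % N = (j : ℕ)) ∨
       (∃ k : Fin (m+1), 1 ≤ (k : ℕ) ∧ ((j : ℕ) + k) % N = (i : ℕ)))) (by
    constructor
    · rintro ⟨hne, h | h⟩ <;> obtain ⟨k, h1, h2⟩ := h
      · exact ⟨hne, Or.inl ⟨k, h1, by omega, h2⟩⟩
      · exact ⟨hne, Or.inr ⟨k, h1, by omega, h2⟩⟩
    · rintro ⟨hne, h | h⟩ <;> obtain ⟨k, h1, h2, h3⟩ := h
      · exact ⟨hne, Or.inl ⟨⟨k, by omega⟩, h1, h3⟩⟩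
      · exact ⟨hne, Or.inr ⟨⟨k, by omega⟩, h1, h3⟩⟩)

instance calGDec (n : ℕ) : DecidableRel (calG n).Adj := fun i j =>
  inferInstanceAs (Decidable (i ≠ j ∧
    (((i : ℕ) = 0 ∨ (j : ℕ) = 0 ∨ ¬ (((i : ℕ) - 1 + (n - 1) / 2) % (n - 1) = (j : ℕ) - 1)) ∨
     ((j : ℕ) = 0 ∨ (i : ℕ) = 0 ∨ ¬ (((j : ℕ) - 1 + (n - 1) / 2) % (n - 1) = (i : ℕ) - 1)))))

instance tensorDec {α β : Type*} (G : SimpleGraph α) (H : SimpleGraph β)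
    [DecidableRel G.Adj] [DecidableRel H.Adj] : DecidableRel (tensorProd G H).Adj := fun x y =>
  inferInstanceAs (Decidable (G.Adj x.1 y.1 ∧ H.Adj x.2 y.2))

lemma wsum_ite {V : Type*} [Fintype V] (G : SimpleGraph V) [DecidableRel G.Adj]
    (f : V → ℕ) (u : V) : wsum G f u = ∑ v, if G.Adj u v then f v else 0 := by
  rw [wsum, Finset.sum_filter]
  exact Finset.sum_congr rfl fun v _ => by by_cases h : G.Adj u v <;> simp [h]

lemma wsum_congr_set {V : Type*} [Fintype V] (G : SimpleGraph V) (f : V → ℕ) (u : V)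
    (s : Finset V) (h : ∀ v, G.Adj u v ↔ v ∈ s) : wsum G f u = ∑ v ∈ s, f v := by
  unfold wsum
  congr 1
  ext v
  simp [Finset.mem_filter, h]
def labN (g h : ℕ) : ℕ :=
  (([[14,15,19,18],[17,16,0,2],[4,5,6,7],[1,3,13,10],[9,8,12,11]] : List (List ℕ)).getD g []).getD h 0

def invN : ℕ → Fin 5 × Fin 4 := fun i =>
  ([(1,2),(3,0),(1,3),(3,1),(2,0),(2,1),(2,2),(2,3),(4,1),(4,0),(3,3),(4,3),(4,2),(3,2),(0,0),(0,1),(1,1),(1,0),(0,3),(0,2)] : List (Fin 5 × Fin 4)).getD i (0,0)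

def labE : Fin 5 × Fin 4 ≃ Fin 20 where
  toFun p := ⟨labN p.1 p.2 % 20, by omega⟩
  invFun i := invN i
  left_inv := by decide
  right_inv := by decide

example : ∀ u, wsum (tensorProd (calG 5) (circulant 4 1))
    (fun v => ((labE v : ℕ)) + 1) u = 70 := by
  intro u
  rw [wsum_ite]
  revert u
  decide
lemma magic5 : IsDistanceMagic (tensorProd (calG 5) (circulant 4 1)) := by
  have hc : Fintype.card (Fin 5 × Fin 4) = 20 := by simp
  refine ⟨labE.trans (finCongr hc.symm), 70, ?_⟩
  have hval : ∀ v, (((labE.trans (finCongr hc.symm)) v : ℕ)) = (labE v : ℕ) := by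
    intro v; rfl
  intro u
  simp only [hval]
  rw [wsum_ite]
  revert u
  decide
lemma fin_label_sum (N : ℕ) : 2 * ∑ j : Fin N, ((j : ℕ) + 1) = N * (N + 1) := by
  induction N with
  | zero => simp
  | succ m ih =>
    rw [Fin.sum_univ_castSucc]
    simp only [Fin.coe_castSucc, Fin.val_last]
    rw [Nat.mul_add, ih]
    ring

lemma forward_aux (k : ℕ) (hk1 : 1 ≤ k)
    (h : IsDistanceMagic (tensorProd (calG (2 * k + 1)) (circulant 4 1))) : k = 2 := by
  obtain ⟨f, c, hf⟩ := h
  haveI : NeZero (2 * k + 1) := ⟨by omega⟩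
  set L : Fin (2 * k + 1) × Fin 4 → ℕ := fun v => (f v : ℕ) + 1 with hL
  set A : Fin (2 * k + 1) → ℕ := fun g => L (g, 0) + L (g, 2) with hA
  set B : Fin (2 * k + 1) → ℕ := fun g => L (g, 1) + L (g, 3) with hB
  have h2k : 0 < 2 * k := by omega
  have hmod : ∀ a, a < 2 * k → (a + k) % (2 * k) = if a < k then a + k else a - k := by
    intro a ha
    split_ifs with h
    · exact Nat.mod_eq_of_lt (by omega)
    · rw [Nat.mod_eq_sub_mod (by omega), Nat.mod_eq_of_lt (by omega)]
      omega
  set M : Fin (2 * k + 1) → Fin (2 * k + 1) := fun i =>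
    ⟨((i : ℕ) - 1 + k) % (2 * k) + 1, by
      have := Nat.mod_lt ((i : ℕ) - 1 + k) h2k; omega⟩ with hM
  have hMval : ∀ i : Fin (2 * k + 1), (M i : ℕ) = ((i : ℕ) - 1 + k) % (2 * k) + 1 :=
    fun i => rfl
  have hMne0 : ∀ i, (M i : ℕ) ≠ 0 := by intro i; rw [hMval]; omega
  have key : ∀ a, a < 2 * k → ((a + k) % (2 * k) + k) % (2 * k) = a := by
    intro a ha
    have h1 := hmod a ha
    by_cases h : a < k
    · rw [h1, if_pos h, hmod (a + k) (by omega), if_neg (by omega)]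
      omega
    · rw [h1, if_neg h, hmod (a - k) (by omega), if_pos (by omega)]
      omega
  have hMM : ∀ i : Fin (2 * k + 1), (i : ℕ) ≠ 0 → M (M i) = i := by
    intro i hi
    apply Fin.ext
    rw [hMval, hMval]
    have ha : (i : ℕ) - 1 < 2 * k := by have := i.isLt; omega
    have he : ((i : ℕ) - 1 + k) % (2 * k) + 1 - 1 = ((i : ℕ) - 1 + k) % (2 * k) := by omega
    rw [he, key _ ha]
    omega
  have hMne : ∀ i : Fin (2 * k + 1), (i : ℕ) ≠ 0 → M i ≠ i := by
    intro i hi heq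
    have hv : ((i : ℕ) - 1 + k) % (2 * k) + 1 = (i : ℕ) := by rw [← hMval, heq]
    have ha : (i : ℕ) - 1 < 2 * k := by have := i.isLt; omega
    rw [hmod _ ha] at hv
    split_ifs at hv <;> omega
  have hvalne : ∀ a : Fin (2 * k + 1), a ≠ 0 → (a : ℕ) ≠ 0 := by
    intro a h hv
    exact h (Fin.ext (by simp [hv]))
  have he1 : (2 * k + 1 - 1) / 2 = k := by omega
  have he2 : 2 * k + 1 - 1 = 2 * k := by omega
  have he3 : 2 * k / 2 = k := by omega
  -- adjacency in calG
  have hadj0 : ∀ j : Fin (2 * k + 1), (calG (2 * k + 1)).Adj 0 j ↔ j ≠ 0 := by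
    intro j
    constructor
    · intro h hj
      exact (calG _).loopless.irrefl _ (hj ▸ h)
    · intro hj
      exact ⟨fun h => hj h.symm, Or.inl (Or.inl (by simp))⟩
  have hadjI : ∀ i j : Fin (2 * k + 1), (i : ℕ) ≠ 0 →
      ((calG (2 * k + 1)).Adj i j ↔ (j ≠ i ∧ j ≠ M i)) := by
    intro i j hi
    have hia : (i : ℕ) - 1 < 2 * k := by have := i.isLt; omega
    have hne' : i ≠ j ↔ j ≠ i := ne_comm
    simp only [calG, SimpleGraph.fromRel_adj, he2, he3, he1]
    by_cases hj : (j : ℕ) = 0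
    · have hjMi : j ≠ M i := by
        intro h
        exact hMne0 i (h ▸ hj)
      constructor
      · rintro ⟨h1, -⟩
        exact ⟨fun e => h1 e.symm, hjMi⟩
      · rintro ⟨h1, -⟩
        exact ⟨fun e => h1 e.symm, Or.inl (Or.inr (Or.inl hj))⟩
    · have hja : (j : ℕ) - 1 < 2 * k := by have := j.isLt; omega
      have hiff : (((i : ℕ) - 1 + k) % (2 * k) = (j : ℕ) - 1) ↔
          (((j : ℕ) - 1 + k) % (2 * k) = (i : ℕ) - 1) := by
        constructor <;> intro h
        · rw [← h, key _ hia]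
        · rw [← h, key _ hja]
      have hjM : j = M i ↔ ((i : ℕ) - 1 + k) % (2 * k) = (j : ℕ) - 1 := by
        rw [Fin.ext_iff, hMval]
        omega
      constructor
      · rintro ⟨h1, h2⟩
        refine ⟨fun e => h1 e.symm, fun e => ?_⟩
        rw [hjM] at e
        rcases h2 with (h | h | h) | (h | h | h)
        · exact hi h
        · exact hj h
        · exact h e
        · exact hj h
        · exact hi h
        · exact h (hiff.mp e)
      · rintro ⟨h1, h2⟩
        exact ⟨fun e => h1 e.symm,
          Or.inl (Or.inr (Or.inr (fun e => h2 (hjM.mpr e))))⟩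
  -- neighborhoods as finsets
  have hg0 : ∀ a, (calG (2 * k + 1)).Adj 0 a ↔ a ∈ univ.erase (0 : Fin (2 * k + 1)) := by
    intro a
    rw [Finset.mem_erase]
    simp [hadj0 a]
  have hgi : ∀ i : Fin (2 * k + 1), (i : ℕ) ≠ 0 →
      ∀ a, (calG (2 * k + 1)).Adj i a ↔ a ∈ (univ.erase i).erase (M i) := by
    intro i hi a
    rw [Finset.mem_erase, Finset.mem_erase]
    rw [hadjI i a hi]
    simp only [Finset.mem_univ, and_true]
    tauto
  have hc0 : ∀ b : Fin 4, (circulant 4 1).Adj 0 b ↔ b ∈ ({1, 3} : Finset (Fin 4)) := by decide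
  have hc1 : ∀ b : Fin 4, (circulant 4 1).Adj 1 b ↔ b ∈ ({0, 2} : Finset (Fin 4)) := by decide
  have htensor : ∀ (g : Fin (2 * k + 1)) (h : Fin 4) (sG : Finset (Fin (2 * k + 1)))
      (sH : Finset (Fin 4)),
      (∀ a, (calG (2 * k + 1)).Adj g a ↔ a ∈ sG) →
      (∀ b, (circulant 4 1).Adj h b ↔ b ∈ sH) →
      wsum (tensorProd (calG (2 * k + 1)) (circulant 4 1)) L (g, h)
        = ∑ a ∈ sG, ∑ b ∈ sH, L (a, b) := by
    intro g h sG sH hG hH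
    rw [wsum_congr_set _ L (g, h) (sG ×ˢ sH) ?_]
    · exact Finset.sum_product _ _ _
    · rintro ⟨a, b⟩
      rw [Finset.mem_product]
      exact and_congr (hG a) (hH b)
  have hBsum : ∀ s : Finset (Fin (2 * k + 1)),
      (∑ a ∈ s, ∑ b ∈ ({1, 3} : Finset (Fin 4)), L (a, b)) = ∑ a ∈ s, B a := by
    intro s
    refine Finset.sum_congr rfl fun a _ => ?_
    rw [Finset.sum_pair (by decide)]
  have hAsum : ∀ s : Finset (Fin (2 * k + 1)),
      (∑ a ∈ s, ∑ b ∈ ({0, 2} : Finset (Fin 4)), L (a, b)) = ∑ a ∈ s, A a := by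
    intro s
    refine Finset.sum_congr rfl fun a _ => ?_
    rw [Finset.sum_pair (by decide)]
  -- the basic equations
  have E0B : ∑ a ∈ univ.erase (0 : Fin (2 * k + 1)), B a = c := by
    rw [← hf (0, 0), htensor 0 0 _ _ hg0 hc0, hBsum]
  have E0A : ∑ a ∈ univ.erase (0 : Fin (2 * k + 1)), A a = c := by
    rw [← hf (0, 1), htensor 0 1 _ _ hg0 hc1, hAsum]
  have hSB := Finset.sum_erase_add univ B (Finset.mem_univ (0 : Fin (2 * k + 1)))
  have hSA := Finset.sum_erase_add univ A (Finset.mem_univ (0 : Fin (2 * k + 1)))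
  have EiB : ∀ i : Fin (2 * k + 1), (i : ℕ) ≠ 0 → B i + B (M i) = B 0 := by
    intro i hi
    have h1 : ∑ a ∈ (univ.erase i).erase (M i), B a = c := by
      rw [← hf (i, 0), htensor i 0 _ _ (hgi i hi) hc0, hBsum]
    have hMmem : M i ∈ univ.erase i :=
      Finset.mem_erase.mpr ⟨hMne i hi, Finset.mem_univ _⟩
    have h2 := Finset.sum_erase_add (univ.erase i) B hMmem
    have h3 := Finset.sum_erase_add univ B (Finset.mem_univ i)
    omega
  have EiA : ∀ i : Fin (2 * k + 1), (i : ℕ) ≠ 0 → A i + A (M i) = A 0 := by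
    intro i hi
    have h1 : ∑ a ∈ (univ.erase i).erase (M i), A a = c := by
      rw [← hf (i, 1), htensor i 1 _ _ (hgi i hi) hc1, hAsum]
    have hMmem : M i ∈ univ.erase i :=
      Finset.mem_erase.mpr ⟨hMne i hi, Finset.mem_univ _⟩
    have h2 := Finset.sum_erase_add (univ.erase i) A hMmem
    have h3 := Finset.sum_erase_add univ A (Finset.mem_univ i)
    omega
  -- reindexing by M
  have hMmem' : ∀ a : Fin (2 * k + 1), a ∈ univ.erase (0 : Fin (2 * k + 1)) →
      M a ∈ univ.erase (0 : Fin (2 * k + 1)) := by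
    intro a _
    refine Finset.mem_erase.mpr ⟨?_, Finset.mem_univ _⟩
    intro h
    exact hMne0 a (by rw [h]; simp)
  have hMinv : ∀ a : Fin (2 * k + 1), a ∈ univ.erase (0 : Fin (2 * k + 1)) → M (M a) = a := by
    intro a ha
    exact hMM a (hvalne a (Finset.mem_erase.mp ha).1)
  have hrev : ∀ F : Fin (2 * k + 1) → ℕ,
      ∑ i ∈ univ.erase (0 : Fin (2 * k + 1)), F (M i)
        = ∑ i ∈ univ.erase (0 : Fin (2 * k + 1)), F i := by
    intro F
    exact Finset.sum_nbij' M M hMmem' hMmem' hMinv hMinv (fun a _ => rfl)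
  have hcard : (univ.erase (0 : Fin (2 * k + 1))).card = 2 * k := by
    rw [Finset.card_erase_of_mem (Finset.mem_univ _), Finset.card_univ, Fintype.card_fin]
    omega
  have hpairsum : ∀ F : Fin (2 * k + 1) → ℕ, (∀ i : Fin (2 * k + 1), (i : ℕ) ≠ 0 →
      F i + F (M i) = F 0) →
      2 * (∑ i ∈ univ.erase (0 : Fin (2 * k + 1)), F i) = 2 * k * F 0 := by
    intro F hFpair
    have step1 : (∑ i ∈ univ.erase (0 : Fin (2 * k + 1)), F i)
        + (∑ i ∈ univ.erase (0 : Fin (2 * k + 1)), F (M i))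
        = ∑ i ∈ univ.erase (0 : Fin (2 * k + 1)), (F i + F (M i)) :=
      Finset.sum_add_distrib.symm
    have step2 : ∑ i ∈ univ.erase (0 : Fin (2 * k + 1)), (F i + F (M i))
        = ∑ _i ∈ univ.erase (0 : Fin (2 * k + 1)), F 0 := by
      refine Finset.sum_congr rfl fun i hi => ?_
      exact hFpair i (hvalne i (Finset.mem_erase.mp hi).1)
    rw [hrev F] at step1
    rw [Finset.sum_const, hcard, smul_eq_mul] at step2
    omega
  have hTB := hpairsum B EiB
  have hTA := hpairsum A EiA
  -- totals
  have htot : ∑ v : Fin (2 * k + 1) × Fin 4, L v = (∑ g, A g) + (∑ g, B g) := by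
    rw [Fintype.sum_prod_type, ← Finset.sum_add_distrib]
    refine Finset.sum_congr rfl fun g _ => ?_
    rw [Fin.sum_univ_four]
    simp only [hA, hB]
    ring
  have hNcard : Fintype.card (Fin (2 * k + 1) × Fin 4) = 4 * (2 * k + 1) := by
    simp [Fintype.card_prod]
    ring
  have hlabsum : ∑ v : Fin (2 * k + 1) × Fin 4, L v
      = ∑ j : Fin (Fintype.card (Fin (2 * k + 1) × Fin 4)), ((j : ℕ) + 1) :=
    Equiv.sum_comp f (fun j => (j : ℕ) + 1)
  have hgauss := fin_label_sum (Fintype.card (Fin (2 * k + 1) × Fin 4))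
  have htot2 : 2 * ((∑ g, A g) + (∑ g, B g)) = (4 * (2 * k + 1)) * (4 * (2 * k + 1) + 1) := by
    rw [← htot, hlabsum, hgauss, hNcard]
  -- A 0 = B 0
  have hA0B0 : A 0 = B 0 := by
    have h1 : 2 * k * A 0 = 2 * k * B 0 := by linarith
    exact Nat.eq_of_mul_eq_mul_left h2k h1
  -- final divisibility
  have hrhs : (4 * (2 * k + 1)) * (4 * (2 * k + 1) + 1) = 4 * ((2 * k + 1) * (8 * k + 5)) := by
    ring
  have hexp : 4 * ((k + 1) * B 0) = 4 * B 0 + 2 * (2 * k * B 0) := by ring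
  have h4 : 4 * ((k + 1) * B 0) = 4 * ((2 * k + 1) * (8 * k + 5)) := by linarith
  have hkey : (k + 1) * B 0 = (2 * k + 1) * (8 * k + 5) :=
    Nat.eq_of_mul_eq_mul_left (by norm_num) h4
  have hdvd1 : (k + 1) ∣ (2 * k + 1) * (8 * k + 5) := ⟨B 0, hkey.symm⟩
  have hring : (2 * k + 1) * (8 * k + 5) = (k + 1) * (16 * k + 2) + 3 := by ring
  rw [hring] at hdvd1
  have hdvd3 : (k + 1) ∣ 3 := (Nat.dvd_add_right ⟨16 * k + 2, rfl⟩).mp hdvd1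
  have hle : k + 1 ≤ 3 := Nat.le_of_dvd (by norm_num) hdvd3
  have hk2 : k ≤ 2 := by omega
  interval_cases k
  · omega
  · rfl
/-- ((K_{n-1} - M) + K_1) × C_4 is distance magic iff n = 5 (n odd, n ≥ 3). -/
theorem calG_tensor_C4_distance_magic_iff (n : ℕ) (hn : 3 ≤ n) (hodd : Odd n) :
    IsDistanceMagic (tensorProd (calG n) (circulant 4 1)) ↔ n = 5 := by
  obtain ⟨k, hk⟩ := hodd
  constructor
  · intro h
    have hkn : n = 2 * k + 1 := by omega
    subst hkn
    have := forward_aux k (by omega) h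
    omega
  · rintro rfl
    exact magic5
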